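/- Let L be an n×n invertible SDDM matrix with integer entries in [-U, U] (U ≥ 2, n ≥ 2), and let b be a nonnegative n-dimensional vector. Then for any two indices i, j ∈ [n] and any d > 0 such that the probability distance satisfies D_L(i, j) ≤ d (equivalently, (L⁻¹)_{ij} ≥ (nU)^{2-d}), one has (nU)^{-d} · (L⁻¹ b)_j ≤ (L⁻¹ b)_i ≤ (nU)^{d} · (L⁻¹ b)_j. -/

import Mathlib

theorem lemA {n : ℕ} (L : Matrix (Fin n) (Fin n) ℝ)
    (hsymm : L.IsSymm)
    (hoff : ∀ i j, i ≠ j → L i j ≤ 0)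
    (hdd : ∀ i, ∑ j ∈ Finset.univ.filter (fun j => j ≠ i), |L i j| ≤ L i i)
    (hinv : IsUnit L)
    (x : Fin n → ℝ) (hx : ∀ k, x k < 0 → 0 ≤ L.mulVec x k) :
    ∀ k, 0 ≤ x k := by
  by_contra hcon
  push_neg at hcon
  obtain ⟨k0, hk0⟩ := hcon
  have hne : (Finset.univ : Finset (Fin n)).Nonempty := ⟨k0, Finset.mem_univ _⟩
  obtain ⟨i0, -, hi0⟩ := Finset.exists_min_image Finset.univ x hne
  set m := x i0 with hm
  have hmneg : m < 0 := lt_of_le_of_lt (hi0 k0 (Finset.mem_univ _)) hk0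
  have hmle : ∀ l, m ≤ x l := fun l => hi0 l (Finset.mem_univ _)
  have herase : ∀ k : Fin n, ∑ l ∈ Finset.univ.erase k, L k l
      = -∑ l ∈ Finset.univ.erase k, |L k l| := by
    intro k
    rw [← Finset.sum_neg_distrib]
    refine Finset.sum_congr rfl fun l hl => ?_
    have hlk : l ≠ k := Finset.ne_of_mem_erase hl
    rw [abs_of_nonpos (hoff k l hlk.symm)]; ring
  have hrow : ∀ k : Fin n, 0 ≤ ∑ l, L k l := by
    intro k
    rw [← Finset.sum_erase_add Finset.univ _ (Finset.mem_univ k), herase k]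
    have := hdd k
    rw [Finset.filter_ne'] at this
    linarith
  have key : ∀ k, x k = m →
      (∀ l, l ≠ k → L k l ≠ 0 → x l = m) ∧ (∑ l, L k l) = 0 := by
    intro k hk
    have hLxk : L.mulVec x k = ∑ l, L k l * x l := by
      simp [Matrix.mulVec, dotProduct]
    set S := ∑ l ∈ Finset.univ.erase k, L k l * (x l - m) with hSdef
    have e1 : ∑ l, L k l * x l = (∑ l, L k l * (x l - m)) + m * (∑ l, L k l) := by
      rw [Finset.mul_sum, ← Finset.sum_add_distrib]
      exact Finset.sum_congr rfl fun l _ => by ring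
    have e2 : ∑ l, L k l * (x l - m) = S := by
      rw [← Finset.sum_erase_add Finset.univ _ (Finset.mem_univ k), hk, sub_self,
        mul_zero, add_zero]
    have hterm : ∀ l ∈ Finset.univ.erase k, L k l * (x l - m) ≤ 0 := by
      intro l hl
      have hlk : l ≠ k := Finset.ne_of_mem_erase hl
      have h1 : L k l ≤ 0 := hoff k l hlk.symm
      have h2 : 0 ≤ x l - m := by linarith [hmle l]
      nlinarith
    have hSle : S ≤ 0 := Finset.sum_nonpos hterm
    have hxk : 0 ≤ L.mulVec x k := hx k (hk ▸ hmneg)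
    have hmrs : m * (∑ l, L k l) ≤ 0 := by
      have := hrow k; nlinarith
    have hEq : L.mulVec x k = S + m * (∑ l, L k l) := by rw [hLxk, e1, e2]
    have hS0 : S = 0 := by linarith [hEq ▸ hxk]
    have hmrs0 : m * (∑ l, L k l) = 0 := by linarith [hEq ▸ hxk]
    have hrs0 : (∑ l, L k l) = 0 := by
      rcases mul_eq_zero.mp hmrs0 with h | h
      · exact absurd h (ne_of_lt hmneg)
      · exact h
    refine ⟨?_, hrs0⟩
    intro l hlk hLkl
    have := (Finset.sum_eq_zero_iff_of_nonpos hterm).mp hS0 l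
      (Finset.mem_erase.mpr ⟨hlk, Finset.mem_univ l⟩)
    rcases mul_eq_zero.mp this with h | h
    · exact absurd h hLkl
    · linarith
  set z : Fin n → ℝ := fun l => if x l = m then 1 else 0 with hz
  have hLz : L.mulVec z = 0 := by
    funext k
    have hzk : L.mulVec z k = ∑ l, L k l * z l := by
      simp [Matrix.mulVec, dotProduct]
    rw [hzk]
    by_cases hk : x k = m
    · have e : ∑ l, L k l * z l = ∑ l, L k l := by
        refine Finset.sum_congr rfl fun l _ => ?_
        by_cases hxl : x l = m
        · simp [hz, hxl]
        · have hlk : l ≠ k := fun h => hxl (h ▸ hk)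
          have hL0 : L k l = 0 := by
            by_contra h
            exact hxl ((key k hk).1 l hlk h)
          simp [hz, hxl, hL0]
      rw [e, (key k hk).2]; rfl
    · refine Eq.trans (Finset.sum_eq_zero fun l _ => ?_) rfl
      by_cases hxl : x l = m
      · have hkl : k ≠ l := fun h => hk (h ▸ hxl)
        have hLlk : L l k = 0 := by
          by_contra h
          exact hk ((key l hxl).1 k hkl h)
        have hsym : L k l = L l k := (hsymm.apply l k).symm ▸ rfl
        rw [show L k l = L l k from by rw [← hsymm.apply l k] ]
        simp [hLlk]
      · simp [hz, hxl]
  have hdet : IsUnit L.det := (Matrix.isUnit_iff_isUnit_det L).mp hinv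
  have hz0 : z = 0 := by
    calc z = (L⁻¹ * L).mulVec z := by
            rw [Matrix.nonsing_inv_mul L hdet, Matrix.one_mulVec]
    _ = L⁻¹.mulVec (L.mulVec z) := (Matrix.mulVec_mulVec z L⁻¹ L).symm
    _ = 0 := by rw [hLz, Matrix.mulVec_zero]
  have : z i0 = 0 := by rw [hz0]; rfl
  simp [hz] at this
  exact this hm.symm

theorem lemKer {n : ℕ} (L : Matrix (Fin n) (Fin n) ℝ) (hinv : IsUnit L)
    (z : Fin n → ℝ) (hLz : L.mulVec z = 0) : z = 0 := by
  have hdet : IsUnit L.det := (Matrix.isUnit_iff_isUnit_det L).mp hinv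
  calc z = (L⁻¹ * L).mulVec z := by
        rw [Matrix.nonsing_inv_mul L hdet, Matrix.one_mulVec]
  _ = L⁻¹.mulVec (L.mulVec z) := (Matrix.mulVec_mulVec z L⁻¹ L).symm
  _ = 0 := by rw [hLz, Matrix.mulVec_zero]

theorem lemD {n : ℕ} (L : Matrix (Fin n) (Fin n) ℝ)
    (hsymm : L.IsSymm)
    (hoff : ∀ i j, i ≠ j → L i j ≤ 0)
    (hdd : ∀ i, ∑ j ∈ Finset.univ.filter (fun j => j ≠ i), |L i j| ≤ L i i)
    (hint : ∀ i j, ∃ z : ℤ, L i j = (z : ℝ))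
    (hinv : IsUnit L)
    (x : Fin n → ℝ) (hx0 : ∀ p, 0 ≤ x p) (l : Fin n)
    (hLx : ∀ p, L.mulVec x p = if p = l then 1 else 0) :
    ∀ k, x k ≤ 1 + n := by
  classical
  set s : Fin n → ℝ := fun p => ∑ q, L p q with hsdef
  have hrow : ∀ k : Fin n, 0 ≤ s k := by
    intro k
    have herase : ∑ q ∈ Finset.univ.erase k, L k q
        = -∑ q ∈ Finset.univ.erase k, |L k q| := by
      rw [← Finset.sum_neg_distrib]
      refine Finset.sum_congr rfl fun q hq => ?_
      rw [abs_of_nonpos (hoff k q (Finset.ne_of_mem_erase hq).symm)]; ring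
    have : s k = ∑ q ∈ Finset.univ.erase k, L k q + L k k := by
      rw [hsdef, Finset.sum_erase_add Finset.univ _ (Finset.mem_univ k)]
    have hdd' := hdd k
    rw [Finset.filter_ne'] at hdd'
    rw [this, herase]; linarith
  have hsint : ∀ p : Fin n, ∃ z : ℤ, s p = (z : ℝ) := by
    intro p
    choose f hf using hint p
    exact ⟨∑ q, f q, by rw [hsdef]; push_cast; exact Finset.sum_congr rfl fun q _ => hf q⟩
  have hstot : ∑ p, s p * x p = 1 := by
    have h1 : ∑ p, L.mulVec x p = 1 := by
      simp only [hLx]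
      rw [Finset.sum_ite_eq' Finset.univ l (fun _ => (1:ℝ))]
      simp
    have h2 : ∑ p, L.mulVec x p = ∑ p, s p * x p := by
      calc ∑ p, L.mulVec x p = ∑ p, ∑ q, L p q * x q := by
            refine Finset.sum_congr rfl fun p _ => ?_
            simp [Matrix.mulVec, dotProduct]
      _ = ∑ q, ∑ p, L p q * x q := Finset.sum_comm
      _ = ∑ q, s q * x q := by
            refine Finset.sum_congr rfl fun q _ => ?_
            rw [hsdef, Finset.sum_mul]
            exact Finset.sum_congr rfl fun p _ => by rw [hsymm.apply q p]
    linarith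
  -- key dichotomy
  have dich : ∀ k : Fin n, x k ≤ 1 ∨ ∃ p0, x p0 < x k ∧ x k ≤ 1 + x p0 := by
    intro k
    set S : Finset (Fin n) := Finset.univ.filter (fun m => x k ≤ x m) with hS
    have hkS : k ∈ S := Finset.mem_filter.mpr ⟨Finset.mem_univ k, le_refl _⟩
    by_cases hA : ∃ m ∈ S, 1 ≤ s m
    · left
      obtain ⟨m, hmS, hsm⟩ := hA
      have h1 : s m * x m ≤ 1 := by
        rw [← hstot]
        exact Finset.single_le_sum (f := fun p => s p * x p)
          (fun p _ => mul_nonneg (hrow p) (hx0 p)) (Finset.mem_univ m)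
      have hxm : x k ≤ x m := (Finset.mem_filter.mp hmS).2
      nlinarith [hx0 m]
    · push_neg at hA
      have hs0' : ∀ m ∈ S, s m = 0 := by
        intro m hm
        obtain ⟨z, hz⟩ := hsint m
        have h1 : (0:ℤ) ≤ z := by exact_mod_cast hz ▸ hrow m
        have h2 : z < 1 := by exact_mod_cast hz ▸ hA m hm
        have hz0 : z = 0 := by omega
        rw [hz, hz0]; norm_num
      by_cases hB : ∃ m ∈ S, ∃ p, p ∉ S ∧ L m p ≠ 0
      · right
        obtain ⟨m0, hm0, p0, hp0, hL0⟩ := hB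
        have hxp0 : x p0 < x k := by
          by_contra h
          exact hp0 (Finset.mem_filter.mpr ⟨Finset.mem_univ p0, not_lt.mp h⟩)
        refine ⟨p0, hxp0, ?_⟩
        -- the cut computation
        set Sc : Finset (Fin n) := Sᶜ with hSc
        have hp0c : p0 ∈ Sc := Finset.mem_compl.mpr hp0
        have hsplit : ∀ m, (∑ p, L m p * (x p - x m))
            = (∑ p ∈ S, L m p * (x p - x m)) + ∑ p ∈ Sc, L m p * (x p - x m) := by
          intro m
          rw [hSc, Finset.sum_add_sum_compl]
        have hA0 : ∑ m ∈ S, ∑ p ∈ S, L m p * (x p - x m) = 0 := by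
          have hcomm : ∑ m ∈ S, ∑ p ∈ S, L m p * (x p - x m)
              = ∑ p ∈ S, ∑ m ∈ S, L m p * (x p - x m) := Finset.sum_comm
          have hneg : ∑ p ∈ S, ∑ m ∈ S, L m p * (x p - x m)
              = -∑ m ∈ S, ∑ p ∈ S, L m p * (x p - x m) := by
            rw [← Finset.sum_neg_distrib]
            refine Finset.sum_congr rfl fun p _ => ?_
            rw [← Finset.sum_neg_distrib]
            refine Finset.sum_congr rfl fun m _ => ?_
            rw [hsymm.apply p m]; ring
          linarith [hcomm ▸ hneg]
        have hLxm : ∀ m, L.mulVec x m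
            = s m * x m + ∑ p, L m p * (x p - x m) := by
          intro m
          have : L.mulVec x m = ∑ p, L m p * x p := by
            simp [Matrix.mulVec, dotProduct]
          rw [this, hsdef]
          rw [Finset.sum_mul, ← Finset.sum_add_distrib]
          exact Finset.sum_congr rfl fun p _ => by ring
        have hsum1 : ∑ m ∈ S, L.mulVec x m ≤ 1 := by
          have : ∑ m ∈ S, L.mulVec x m ≤ ∑ m, L.mulVec x m := by
            refine Finset.sum_le_sum_of_subset_of_nonneg (Finset.subset_univ S) ?_
            intro p _ _
            rw [hLx p]; split <;> norm_num
          have h1 : ∑ m, L.mulVec x m = 1 := by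
            simp only [hLx]
            rw [Finset.sum_ite_eq' Finset.univ l (fun _ => (1:ℝ))]
            simp
          linarith
        have hQeq : ∑ m ∈ S, ∑ p ∈ Sc, L m p * (x p - x m)
            = ∑ m ∈ S, L.mulVec x m := by
          have e : ∀ m ∈ S, L.mulVec x m
              = s m * x m + (∑ p ∈ S, L m p * (x p - x m)
                + ∑ p ∈ Sc, L m p * (x p - x m)) := fun m _ => by
            rw [hLxm m, hsplit m]
          have etot : ∑ m ∈ S, L.mulVec x m
              = (∑ m ∈ S, s m * x m)
                + ((∑ m ∈ S, ∑ p ∈ S, L m p * (x p - x m))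
                  + ∑ m ∈ S, ∑ p ∈ Sc, L m p * (x p - x m)) := by
            rw [Finset.sum_congr rfl e, Finset.sum_add_distrib, Finset.sum_add_distrib]
          have hz1 : ∑ m ∈ S, s m * x m = 0 :=
            Finset.sum_eq_zero fun m hm => by rw [hs0' m hm, zero_mul]
          rw [etot, hA0, hz1]; ring
        -- single term lower bound
        have hterm_nonneg : ∀ m ∈ S, ∀ p ∈ Sc, 0 ≤ L m p * (x p - x m) := by
          intro m hm p hp
          have hmp : m ≠ p := by
            intro h; exact (Finset.mem_compl.mp hp) (h ▸ hm)
          have h1 : L m p ≤ 0 := hoff m p hmp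
          have hxm : x k ≤ x m := (Finset.mem_filter.mp hm).2
          have hxp : x p < x k := by
            by_contra h
            exact (Finset.mem_compl.mp hp)
              (Finset.mem_filter.mpr ⟨Finset.mem_univ p, not_lt.mp h⟩)
          nlinarith
        have habs : (1:ℝ) ≤ |L m0 p0| := by
          obtain ⟨z, hz⟩ := hint m0 p0
          have hz0 : z ≠ 0 := by
            intro h; apply hL0; rw [hz, h]; norm_num
          rw [hz, ← Int.cast_abs]
          exact_mod_cast Int.one_le_abs hz0
        have hm0p0 : x k - x p0 ≤ L m0 p0 * (x p0 - x m0) := by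
          have h1 : L m0 p0 = -|L m0 p0| := by
            rw [abs_of_nonpos (hoff m0 p0 (by
              intro h; exact hp0 (h ▸ hm0)))]
            ring
          have hxm : x k ≤ x m0 := (Finset.mem_filter.mp hm0).2
          rw [h1]
          nlinarith
        have hsingle : L m0 p0 * (x p0 - x m0)
            ≤ ∑ m ∈ S, ∑ p ∈ Sc, L m p * (x p - x m) := by
          have h1 : L m0 p0 * (x p0 - x m0) ≤ ∑ p ∈ Sc, L m0 p * (x p - x m0) :=
            Finset.single_le_sum (fun p hp => hterm_nonneg m0 hm0 p hp) hp0c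
          have h2 : ∑ p ∈ Sc, L m0 p * (x p - x m0)
              ≤ ∑ m ∈ S, ∑ p ∈ Sc, L m p * (x p - x m) :=
            Finset.single_le_sum
              (fun m hm => Finset.sum_nonneg fun p hp => hterm_nonneg m hm p hp) hm0
          linarith
        linarith [hQeq ▸ hsingle]
      · -- kernel contradiction
        exfalso
        push_neg at hB
        set z : Fin n → ℝ := fun p => if p ∈ S then 1 else 0 with hz
        have hLz : L.mulVec z = 0 := by
          funext q
          have hq : L.mulVec z q = ∑ p, L q p * z p := by
            simp [Matrix.mulVec, dotProduct]
          have hqq : ∑ p, L q p * z p = ∑ p ∈ S, L q p := by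
            simp only [hz, mul_ite, mul_one, mul_zero]
            rw [Finset.sum_ite_mem, Finset.univ_inter]
          simp only [Pi.zero_apply]
          rw [hq, hqq]
          by_cases hqS : q ∈ S
          · have h1 : ∑ p ∈ S, L q p + ∑ p ∈ Sᶜ, L q p = s q :=
              Finset.sum_add_sum_compl S _
            have h2 : ∑ p ∈ Sᶜ, L q p = 0 :=
              Finset.sum_eq_zero fun p hp => hB q hqS p (Finset.mem_compl.mp hp)
            have h3 := hs0' q hqS
            linarith
          · refine Finset.sum_eq_zero fun p hp => ?_
            have h4 := hB p hp q hqS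
            rw [hsymm.apply p q, h4]
        have := congrFun (lemKer L hinv z hLz) k
        simp only [hz, hkS, if_pos] at this
        exact one_ne_zero this
  -- induction
  have main : ∀ N : ℕ, ∀ k : Fin n,
      (Finset.univ.filter (fun m => x m < x k)).card ≤ N → x k ≤ 1 + N := by
    intro N
    induction N with
    | zero =>
      intro k hcard
      rcases dich k with h | ⟨p0, hp0, _⟩
      · simpa using h
      · exfalso
        have : p0 ∈ Finset.univ.filter (fun m => x m < x k) :=
          Finset.mem_filter.mpr ⟨Finset.mem_univ p0, hp0⟩
        have := Finset.card_pos.mpr ⟨p0, this⟩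
        omega
    | succ N ih =>
      intro k hcard
      rcases dich k with h | ⟨p0, hp0, hle⟩
      · push_cast; linarith
      · have hsub : Finset.univ.filter (fun m => x m < x p0)
            ⊂ Finset.univ.filter (fun m => x m < x k) := by
          refine Finset.ssubset_iff_of_subset ?_ |>.mpr ⟨p0, ?_, ?_⟩
          · intro m hm
            have := (Finset.mem_filter.mp hm).2
            exact Finset.mem_filter.mpr ⟨Finset.mem_univ m, lt_trans this hp0⟩
          · exact Finset.mem_filter.mpr ⟨Finset.mem_univ p0, hp0⟩
          · simp
        have hcard' : (Finset.univ.filter (fun m => x m < x p0)).card ≤ N := by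
          have := Finset.card_lt_card hsub
          omega
        have := ih p0 hcard'
        push_cast
        push_cast at this
        linarith
  intro k
  have := main n k (by
    calc (Finset.univ.filter (fun m => x m < x k)).card
        ≤ (Finset.univ : Finset (Fin n)).card := Finset.card_filter_le _ _
    _ = n := by simp)
  exact this
theorem lemB {n : ℕ} (L : Matrix (Fin n) (Fin n) ℝ)
    (hsymm : L.IsSymm)
    (hoff : ∀ i j, i ≠ j → L i j ≤ 0)
    (hdd : ∀ i, ∑ j ∈ Finset.univ.filter (fun j => j ≠ i), |L i j| ≤ L i i)
    (hinv : IsUnit L) :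
    ∀ k l, 0 ≤ L⁻¹ k l := by
  intro k l
  have hdet : IsUnit L.det := (Matrix.isUnit_iff_isUnit_det L).mp hinv
  refine lemA L hsymm hoff hdd hinv (fun p => L⁻¹ p l) (fun p _ => ?_) k
  have e : L.mulVec (fun q => L⁻¹ q l) p = (L * L⁻¹) p l := by
    rw [Matrix.mul_apply]
    simp [Matrix.mulVec, dotProduct]
  rw [e, Matrix.mul_nonsing_inv L hdet, Matrix.one_apply]
  split <;> norm_num

theorem lemDiag {n : ℕ} (L : Matrix (Fin n) (Fin n) ℝ)
    (hsymm : L.IsSymm)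
    (hoff : ∀ i j, i ≠ j → L i j ≤ 0)
    (hdiag : ∀ i, 0 < L i i)
    (hdd : ∀ i, ∑ j ∈ Finset.univ.filter (fun j => j ≠ i), |L i j| ≤ L i i)
    (hinv : IsUnit L) :
    ∀ j, 0 < L⁻¹ j j := by
  intro j
  have hdet : IsUnit L.det := (Matrix.isUnit_iff_isUnit_det L).mp hinv
  have hB := lemB L hsymm hoff hdd hinv
  have h1 : (1:ℝ) = ∑ k, L j k * L⁻¹ k j := by
    rw [← Matrix.mul_apply, Matrix.mul_nonsing_inv L hdet, Matrix.one_apply_eq]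
  have h3 : ∑ k ∈ Finset.univ.erase j, L j k * L⁻¹ k j ≤ 0 :=
    Finset.sum_nonpos fun k hk => mul_nonpos_iff.mpr
      (Or.inr ⟨hoff j k (Finset.ne_of_mem_erase hk).symm, hB k j⟩)
  have h2 : (1:ℝ) ≤ L j j * L⁻¹ j j := by
    rw [h1, ← Finset.sum_erase_add Finset.univ _ (Finset.mem_univ j)]
    linarith
  nlinarith [hdiag j, hB j j]

theorem lemC {n : ℕ} (L : Matrix (Fin n) (Fin n) ℝ)
    (hsymm : L.IsSymm)
    (hoff : ∀ i j, i ≠ j → L i j ≤ 0)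
    (hdiag : ∀ i, 0 < L i i)
    (hdd : ∀ i, ∑ j ∈ Finset.univ.filter (fun j => j ≠ i), |L i j| ≤ L i i)
    (hinv : IsUnit L) :
    ∀ p q r, L⁻¹ p r * L⁻¹ r q ≤ L⁻¹ p q * L⁻¹ r r := by
  intro p q r
  have hdet : IsUnit L.det := (Matrix.isUnit_iff_isUnit_det L).mp hinv
  have hB := lemB L hsymm hoff hdd hinv
  have hrr : 0 < L⁻¹ r r := lemDiag L hsymm hoff hdiag hdd hinv r
  set c : ℝ := L⁻¹ r q / L⁻¹ r r with hc
  set w : Fin n → ℝ :=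
    fun t => (if t = q then 1 else 0) - c * (if t = r then 1 else 0) with hw
  set y : Fin n → ℝ := fun m => L⁻¹ m q - c * L⁻¹ m r with hy
  have hyw : y = L⁻¹.mulVec w := by
    funext m
    have : L⁻¹.mulVec w m
        = (∑ t, L⁻¹ m t * (if t = q then 1 else 0))
          - c * ∑ t, L⁻¹ m t * (if t = r then 1 else 0) := by
      simp only [Matrix.mulVec, dotProduct, hw, Finset.mul_sum,
        ← Finset.sum_sub_distrib]
      exact Finset.sum_congr rfl fun t _ => by ring
    rw [hy, this]
    simp only [mul_ite, mul_one, mul_zero]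
    rw [Finset.sum_ite_eq' Finset.univ q, Finset.sum_ite_eq' Finset.univ r]
    simp
  have hLy : L.mulVec y = w := by
    rw [hyw, Matrix.mulVec_mulVec, Matrix.mul_nonsing_inv L hdet, Matrix.one_mulVec]
  have hyr : y r = 0 := by
    show L⁻¹ r q - c * L⁻¹ r r = 0
    rw [hc, div_mul_cancel₀ _ hrr.ne', sub_self]
  have hy0 : ∀ m, 0 ≤ y m := by
    refine lemA L hsymm hoff hdd hinv y fun m hm => ?_
    have hmr : m ≠ r := by
      intro h; rw [h, hyr] at hm; exact lt_irrefl 0 hm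
    rw [hLy]
    simp only [hw, if_neg hmr, mul_zero, sub_zero]
    split <;> norm_num
  have hc' : c * L⁻¹ r r = L⁻¹ r q := by
    rw [hc, div_mul_cancel₀ _ hrr.ne']
  have h6 : L⁻¹ p r * L⁻¹ r q = c * L⁻¹ p r * L⁻¹ r r := by
    rw [← hc']; ring
  have h5 : 0 ≤ (L⁻¹ p q - c * L⁻¹ p r) * L⁻¹ r r :=
    mul_nonneg (hy0 p) hrr.le
  rw [h6]; nlinarith [h5]

/-- Let `L` be an `n × n` invertible SDDM matrix with integer entries in
`[-U, U]` (`U ≥ 2`, `n ≥ 2`) and `b` a nonnegative vector.  For any indices `i, j` and any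
`d > 0` such that the probability distance satisfies `D_L(i, j) ≤ d` (equivalently
`(L⁻¹)ᵢⱼ ≥ (nU)^{2-d}`), one has
`(nU)^{-d} (L⁻¹ b)ⱼ ≤ (L⁻¹ b)ᵢ ≤ (nU)^{d} (L⁻¹ b)ⱼ`. -/
theorem sddm_solution_of_near_vertices {n : ℕ} (hn : 2 ≤ n) (U : ℕ) (hU : 2 ≤ U)
    (L : Matrix (Fin n) (Fin n) ℝ)
    (hsymm : L.IsSymm)
    (hoff : ∀ i j, i ≠ j → L i j ≤ 0)
    (hdiag : ∀ i, 0 < L i i)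
    (hdd : ∀ i, ∑ j ∈ Finset.univ.filter (fun j => j ≠ i), |L i j| ≤ L i i)
    (hint : ∀ i j, ∃ z : ℤ, L i j = (z : ℝ))
    (hbd : ∀ i j, |L i j| ≤ (U : ℝ))
    (hinv : IsUnit L)
    (b : Fin n → ℝ) (hb : ∀ i, 0 ≤ b i)
    (i j : Fin n) (d : ℝ) (hd : 0 < d)
    (hnear : ((n : ℝ) * U) ^ ((2 : ℝ) - d) ≤ L⁻¹ i j) :
    ((n : ℝ) * U) ^ (-d) * L⁻¹.mulVec b j ≤ L⁻¹.mulVec b i ∧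
      L⁻¹.mulVec b i ≤ ((n : ℝ) * U) ^ d * L⁻¹.mulVec b j := by
  have hdet : IsUnit L.det := (Matrix.isUnit_iff_isUnit_det L).mp hinv
  have hB := lemB L hsymm hoff hdd hinv
  have hC := lemC L hsymm hoff hdiag hdd hinv
  set W : ℝ := (n : ℝ) * U with hWdef
  have hn2 : (2:ℝ) ≤ (n:ℝ) := by exact_mod_cast hn
  have hU2 : (2:ℝ) ≤ (U:ℝ) := by exact_mod_cast hU
  have hW4 : (4:ℝ) ≤ W := by rw [hWdef]; nlinarith
  have hW0 : (0:ℝ) < W := by linarith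
  have hW2 : (1:ℝ) + n ≤ W ^ (2:ℝ) := by
    rw [show (2:ℝ) = ((2:ℕ):ℝ) by norm_num, Real.rpow_natCast, hWdef]
    nlinarith
  -- entry bound for L⁻¹
  have hDb : ∀ k l : Fin n, L⁻¹ k l ≤ 1 + n := by
    intro k l
    refine lemD L hsymm hoff hdd hint hinv (fun p => L⁻¹ p l) (fun p => hB p l) l
      (fun p => ?_) k
    have e : L.mulVec (fun q => L⁻¹ q l) p = (L * L⁻¹) p l := by
      rw [Matrix.mul_apply]
      simp [Matrix.mulVec, dotProduct]
    rw [e, Matrix.mul_nonsing_inv L hdet, Matrix.one_apply]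
  have hDiagBound : ∀ r : Fin n, L⁻¹ r r ≤ W ^ (2:ℝ) :=
    fun r => le_trans (hDb r r) hW2
  -- symmetry of the inverse
  have hsymB : L⁻¹ j i = L⁻¹ i j := by
    have h1 : L⁻¹.transpose = L⁻¹ := by
      rw [Matrix.transpose_nonsing_inv, hsymm]
    exact (congrFun (congrFun h1 i) j).symm ▸ rfl
  -- key componentwise comparison
  have key : ∀ a c : Fin n, W ^ ((2:ℝ) - d) ≤ L⁻¹ a c →
      ∀ k, W ^ (-d) * L⁻¹ c k ≤ L⁻¹ a k := by
    intro a c hac k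
    have hcc : 0 < L⁻¹ c c := lemDiag L hsymm hoff hdiag hdd hinv c
    have hpp := hC a k c
    have e : W ^ (-d) = W ^ ((2:ℝ) - d) / W ^ (2:ℝ) := by
      rw [eq_div_iff (ne_of_gt (Real.rpow_pos_of_pos hW0 2)), ← Real.rpow_add hW0]
      congr 1; ring
    have hfrac : W ^ (-d) ≤ L⁻¹ a c / L⁻¹ c c := by
      rw [e]
      exact div_le_div₀ (hB a c) hac hcc (hDiagBound c)
    calc W ^ (-d) * L⁻¹ c k ≤ (L⁻¹ a c / L⁻¹ c c) * L⁻¹ c k :=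
          mul_le_mul_of_nonneg_right hfrac (hB c k)
    _ ≤ L⁻¹ a k := by
        rw [div_mul_eq_mul_div, div_le_iff₀ hcc]
        linarith [hpp]
  have comp : ∀ a c : Fin n, W ^ ((2:ℝ) - d) ≤ L⁻¹ a c →
      W ^ (-d) * L⁻¹.mulVec b c ≤ L⁻¹.mulVec b a := by
    intro a c hac
    have e1 : L⁻¹.mulVec b a = ∑ k, L⁻¹ a k * b k := by
      simp [Matrix.mulVec, dotProduct]
    have e2 : L⁻¹.mulVec b c = ∑ k, L⁻¹ c k * b k := by
      simp [Matrix.mulVec, dotProduct]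
    rw [e1, e2, Finset.mul_sum]
    refine Finset.sum_le_sum fun k _ => ?_
    rw [← mul_assoc]
    exact mul_le_mul_of_nonneg_right (key a c hac k) (hb k)
  constructor
  · exact comp i j hnear
  · have hnear' : W ^ ((2:ℝ) - d) ≤ L⁻¹ j i := by rw [hsymB]; exact hnear
    have main2 := comp j i hnear'
    have hWd : (0:ℝ) < W ^ d := Real.rpow_pos_of_pos hW0 d
    have h2 : W ^ d * W ^ (-d) = 1 := by
      rw [← Real.rpow_add hW0]; simp
    calc L⁻¹.mulVec b i = W ^ d * W ^ (-d) * L⁻¹.mulVec b i := by rw [h2, one_mul]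
    _ = W ^ d * (W ^ (-d) * L⁻¹.mulVec b i) := by ring
    _ ≤ W ^ d * L⁻¹.mulVec b j := mul_le_mul_of_nonneg_left main2 hWd.le
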